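/- Let r : ℤ → ℝ² be a nondegenerate discrete planar curve and let k ∈ ℤ be such that 1 + κ_k + κ̄_k ≠ 0. Then the point r(k) + (1/(1 + κ_k + κ̄_k)) · (r(k+2) − r(k)) equals the point r(k−1) + ((1 + κ̄_k)/(1 + κ_k + κ̄_k)) · (r(k+1) − r(k−1)); that is, the two consecutive diagonals through r(k), r(k+2) and through r(k−1), r(k+1) intersect at this common point (the vertex of the pentagram map, with centroaffinely invariant division ratios λ_k = 1/(1+κ_k+κ̄_k) and λ̄_k = (1+κ̄_k)/(1+κ_k+κ̄_k)). -/

import Mathlib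

/-- Planar determinant of two vectors in ℝ². -/
def det2 (u v : Fin 2 → ℝ) : ℝ := u 0 * v 1 - u 1 * v 0

/-- Edge tangent vector of a discrete planar curve. -/
def tang2 (r : ℤ → Fin 2 → ℝ) (k : ℤ) : Fin 2 → ℝ := r (k + 1) - r k

/-- Nondegeneracy of a discrete planar curve. -/
def Nondeg2 (r : ℤ → Fin 2 → ℝ) : Prop :=
  ∀ k : ℤ, det2 (tang2 r (k - 1)) (tang2 r k) ≠ 0

/-- First centroaffine curvature. -/
noncomputable def kappa2 (r : ℤ → Fin 2 → ℝ) (k : ℤ) : ℝ :=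
  det2 (tang2 r k) (tang2 r (k + 1)) / det2 (tang2 r (k - 1)) (tang2 r k)

/-- Second centroaffine curvature. -/
noncomputable def kbar2 (r : ℤ → Fin 2 → ℝ) (k : ℤ) : ℝ :=
  det2 (tang2 r (k - 1)) (tang2 r (k + 1)) / det2 (tang2 r (k - 1)) (tang2 r k)

/-- Cramer-type expansion of the third tangent in the tangent basis. -/
lemma tang_expand (r : ℤ → Fin 2 → ℝ) (hr : Nondeg2 r) (k : ℤ) :
    tang2 r (k + 1) = kbar2 r k • tang2 r k - kappa2 r k • tang2 r (k - 1) := by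
  have hd := hr k
  simp only [det2] at hd
  funext i
  simp only [kappa2, kbar2, det2, Pi.sub_apply, Pi.smul_apply, smul_eq_mul]
  fin_cases i <;> simp only [Fin.zero_eta, Fin.mk_one, Fin.isValue] <;> field_simp <;>
    simp only [tang2, Pi.sub_apply] <;> ring

/-- The two consecutive shortest diagonals of a discrete planar curve intersect at the
pentagram-map vertex, with centroaffinely invariant division ratios. -/
theorem stmt_15 (r : ℤ → Fin 2 → ℝ) (hr : Nondeg2 r) (k : ℤ)
    (h : 1 + kappa2 r k + kbar2 r k ≠ 0) :
    r k + (1 / (1 + kappa2 r k + kbar2 r k)) • (r (k + 2) - r k) =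
      r (k - 1) + ((1 + kbar2 r k) / (1 + kappa2 r k + kbar2 r k)) •
        (r (k + 1) - r (k - 1)) := by
  have h1 : r (k + 2) - r k = tang2 r k + tang2 r (k + 1) := by
    have : k + 1 + 1 = k + 2 := by ring
    simp only [tang2, this]; abel
  have h2 : r (k + 1) - r (k - 1) = tang2 r (k - 1) + tang2 r k := by
    have : k - 1 + 1 = k := by ring
    simp only [tang2, this]; abel
  have h3 : r k = r (k - 1) + tang2 r (k - 1) := by
    have : k - 1 + 1 = k := by ring
    simp only [tang2, this]; abel
  rw [h1, h2, h3, tang_expand r hr k]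
  match_scalars <;> field_simp <;> ring
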